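/- If Δ is a pure d-dimensional near-cone with apex 1, then Δ equals the d-skeleton of the cone over Δ−1 with apex 1; that is, Δ = (1 ∗ (Δ−1))^{(d)}. -/

import Mathlib

open Finset

/-- `K` is a near-cone with apex `1`: whenever `F ∈ K`, `1 ∉ F` and `v ∈ F`,
also `(F∖{v}) ∪ {1} ∈ K`. -/
def NearCone1 (K : Finset (Finset ℕ)) : Prop :=
  ∀ F ∈ K, 1 ∉ F → ∀ v ∈ F, insert 1 (F.erase v) ∈ K

/-- The cone with apex `1` over a complex `Γ` (whose faces avoid `1`):
`1 ∗ Γ = {F, F ∪ {1} : F ∈ Γ}`. -/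
def cone1 (Γ : Finset (Finset ℕ)) : Finset (Finset ℕ) :=
  Γ ∪ Γ.image (insert 1)

lemma exists_facet (K : Finset (Finset ℕ)) (F : Finset ℕ) (hF : F ∈ K) :
    ∃ H ∈ K, F ⊆ H ∧ ∀ A ∈ K, H ⊆ A → H = A := by
  obtain ⟨H, hH, hmax⟩ : ∃ H ∈ K.filter (fun A => F ⊆ A),
      ∀ A ∈ K.filter (fun A => F ⊆ A), ¬ H < A := by
    obtain ⟨H, hH, hm⟩ := Finset.exists_maximal (s := K.filter (fun A => F ⊆ A))
      ⟨F, Finset.mem_filter.mpr ⟨hF, Finset.Subset.refl F⟩⟩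
    exact ⟨H, hH, fun A hA hlt => lt_irrefl H (lt_of_lt_of_le hlt (hm hA hlt.le))⟩
  rw [Finset.mem_filter] at hH
  refine ⟨H, hH.1, hH.2, fun A hA hHA => ?_⟩
  by_contra hne
  exact hmax A (Finset.mem_filter.mpr ⟨hA, hH.2.trans hHA⟩)
    (lt_of_le_of_ne hHA hne)

/-- **A pure near-cone is a skeleton of a cone.**
If `Δ` is a pure `d`-dimensional near-cone with apex `1` (every facet has
dimension `d`, i.e. cardinality `d+1`), then `Δ = (1 ∗ (Δ−1))^{(d)}`, the
`d`-skeleton of the cone with apex `1` over the deletion `Δ−1`. -/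
theorem pure_nearCone_eq_skeleton_cone (d : ℕ) (K : Finset (Finset ℕ))
    (hK : ∀ F ∈ K, ∀ G ⊆ F, G ∈ K)                -- `Δ` is a simplicial complex
    (hne : K.Nonempty)
    (hNC : NearCone1 K)                            -- near-cone with apex `1`
    (hpure : ∀ F ∈ K, (∀ G ∈ K, F ⊆ G → F = G) → F.card = d + 1) :
    -- every facet has dimension `d` : `Δ` is pure `d`-dimensional
    K = (cone1 (K.filter (fun F => 1 ∉ F))).filter (fun F => F.card ≤ d + 1) := by
  ext F
  simp only [Finset.mem_filter, cone1, Finset.mem_union, Finset.mem_image]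
  constructor
  · intro hF
    obtain ⟨H, hH, hFH, hmax⟩ := exists_facet K F hF
    have hcard : F.card ≤ d + 1 := by
      have := hpure H hH hmax
      calc F.card ≤ H.card := Finset.card_le_card hFH
        _ = d + 1 := this
    refine ⟨?_, hcard⟩
    by_cases h1 : 1 ∈ F
    · right
      refine ⟨F.erase 1, ⟨hK F hF _ (Finset.erase_subset _ _),
        Finset.notMem_erase _ _⟩, ?_⟩
      rw [Finset.insert_erase h1]
    · left
      exact ⟨hF, h1⟩
  · rintro ⟨h | ⟨G, hG, rfl⟩, hcard⟩
    · exact h.1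
    · obtain ⟨hGK, hG1⟩ := hG
      obtain ⟨H, hH, hGH, hmax⟩ := exists_facet K G hGK
      have hHcard : H.card = d + 1 := hpure H hH hmax
      have hGd : G.card ≤ d := by
        rw [Finset.card_insert_of_notMem hG1] at hcard
        omega
      have hlt : G.card < H.card := by omega
      obtain ⟨v, hvH, hvG⟩ := Finset.exists_of_ssubset
        (lt_of_le_of_ne hGH (fun he => absurd (he ▸ hlt) (lt_irrefl _)))
      by_cases h1H : 1 ∈ H
      · exact hK H hH _ (Finset.insert_subset h1H hGH)
      · have := hNC H hH h1H v hvH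
        refine hK _ this _ ?_
        exact Finset.insert_subset_insert _ (fun x hx =>
          Finset.mem_erase.mpr ⟨fun he => hvG (he ▸ hx), hGH hx⟩)
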